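/- Let Ω be a field with a valuation μ, fix an integer q ≥ 2 and an integer N ≥ 1, and let (W, (V^j)_{0≤j≤N}) be a filtered torsion group of level N in Ω. Let ξ ∈ Ω satisfy μ(ξ) ≥ μ(ξ + w) for every w ∈ W, and set S = Σ_{w ∈ W} min(μ(ξ), μ(w)). Then: (a) if μ(ξ) > 1/(q−1) then S = μ(ξ) + N; (b) if 1/(q^j(q−1)) < μ(ξ) ≤ 1/(q^{j−1}(q−1)) for some 1 ≤ j ≤ N, then S = q^j · μ(ξ) + N − j, so that N − j + 1/(q−1) < S ≤ N − j + 1 + 1/(q−1); (c) if μ(ξ) ≤ 1/(q^N(q−1)) then S = q^N · μ(ξ). In particular, if S > N + 1/(q−1) then μ(ξ) > 1/(q−1). -/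

import Mathlib

lemma nsmul_coe_withTop (n : ℕ) (r : ℝ) :
    n • ((r : WithTop ℝ)) = ((n * r : ℝ) : WithTop ℝ) := by
  induction n with
  | zero => simp
  | succ k ih =>
      rw [succ_nsmul, ih, ← WithTop.coe_add]
      exact congrArg _ (by push_cast; ring)

lemma sum_chain_telescope {α M : Type*} [AddCommMonoid M] [DecidableEq α]
    (T : ℕ → Finset α) (g : α → M) :
    ∀ n, (∀ j < n, T j ⊆ T (j + 1)) →
      ∑ w ∈ T n, g w
        = ∑ w ∈ T 0, g w + ∑ j ∈ Finset.range n, ∑ w ∈ T (j + 1) \ T j, g w := by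
  intro n
  induction n with
  | zero => simp
  | succ k ih =>
      intro h
      have hk : T k ⊆ T (k + 1) := h k (Nat.lt_succ_self k)
      have hsd := Finset.sum_sdiff (f := g) hk
      rw [← hsd, ih (fun j hj => h j (hj.trans (Nat.lt_succ_self k))),
        Finset.sum_range_succ]
      abel

/-- Let `Ω` be a field with a valuation `μ`, `q ≥ 2`, `N ≥ 1`, and let
`(W, (V j)_{0 ≤ j ≤ N})` be a filtered torsion group of level `N` in `Ω`:
`W` is a finite subgroup of `(Ω,+)`, `V 0 = ⊥ ⊆ V 1 ⊆ ⋯ ⊆ V N = W`, `|V j| = q ^ j`, and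
`μ w = 1 / (q^(j-1)(q-1))` for `w ∈ V j \ V (j-1)`. Let `ξ` satisfy `μ ξ ≥ μ (ξ + w)` for
all `w ∈ W` and set `S = ∑_{w ∈ W} min (μ ξ) (μ w)`. Then:
(a) if `μ ξ > 1/(q-1)` then `S = μ ξ + N`;
(b) if `1/(q^j (q-1)) < μ ξ ≤ 1/(q^(j-1) (q-1))` for some `1 ≤ j ≤ N` then
    `S = q^j • μ ξ + (N - j)`, so that `N - j + 1/(q-1) < S ≤ N - j + 1 + 1/(q-1)`;
(c) if `μ ξ ≤ 1/(q^N (q-1))` then `S = q^N • μ ξ`.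
In particular, if `S > N + 1/(q-1)` then `μ ξ > 1/(q-1)`. -/
theorem stmt_1 {Ω : Type*} [Field Ω] (μ : Ω → WithTop ℝ)
    (hμ0 : ∀ x : Ω, μ x = ⊤ ↔ x = 0)
    (hμmul : ∀ x y : Ω, μ (x * y) = μ x + μ y)
    (hμadd : ∀ x y : Ω, min (μ x) (μ y) ≤ μ (x + y))
    (q N : ℕ) (hq : 2 ≤ q) (hN : 1 ≤ N)
    (W : AddSubgroup Ω) (hWfin : (W : Set Ω).Finite)
    (V : ℕ → AddSubgroup Ω)
    (hV0 : V 0 = ⊥) (hVN : V N = W)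
    (hVmono : ∀ j < N, V j ≤ V (j + 1))
    (hVcard : ∀ j ≤ N, Nat.card (V j) = q ^ j)
    (hVval : ∀ j, 1 ≤ j → j ≤ N → ∀ w ∈ V j, w ∉ V (j - 1) →
      μ w = ((1 / ((q : ℝ) ^ (j - 1) * ((q : ℝ) - 1)) : ℝ) : WithTop ℝ))
    (ξ : Ω) (hmax : ∀ w ∈ W, μ (ξ + w) ≤ μ ξ)
    (S : WithTop ℝ) (hS : S = ∑ w ∈ hWfin.toFinset, min (μ ξ) (μ w)) :
    -- (a)
    (((1 / ((q : ℝ) - 1) : ℝ) : WithTop ℝ) < μ ξ →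
        S = μ ξ + ((N : ℝ) : WithTop ℝ)) ∧
    -- (b)
    (∀ j, 1 ≤ j → j ≤ N →
      ((1 / ((q : ℝ) ^ j * ((q : ℝ) - 1)) : ℝ) : WithTop ℝ) < μ ξ →
      μ ξ ≤ ((1 / ((q : ℝ) ^ (j - 1) * ((q : ℝ) - 1)) : ℝ) : WithTop ℝ) →
        S = (q ^ j) • μ ξ + (((N : ℝ) - (j : ℝ) : ℝ) : WithTop ℝ) ∧
        (((N : ℝ) - (j : ℝ) + 1 / ((q : ℝ) - 1) : ℝ) : WithTop ℝ) < S ∧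
        S ≤ (((N : ℝ) - (j : ℝ) + 1 + 1 / ((q : ℝ) - 1) : ℝ) : WithTop ℝ)) ∧
    -- (c)
    (μ ξ ≤ ((1 / ((q : ℝ) ^ N * ((q : ℝ) - 1)) : ℝ) : WithTop ℝ) →
        S = (q ^ N) • μ ξ) ∧
    -- in particular
    ((((N : ℝ) + 1 / ((q : ℝ) - 1) : ℝ) : WithTop ℝ) < S →
      ((1 / ((q : ℝ) - 1) : ℝ) : WithTop ℝ) < μ ξ) := by
  classical
  have hq1 : (1 : ℝ) < (q : ℝ) := by exact_mod_cast hq.trans_lt' (by norm_num)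
  have hq0 : (0 : ℝ) < (q : ℝ) - 1 := by linarith
  set c : ℕ → ℝ := fun i => 1 / ((q : ℝ) ^ (i - 1) * ((q : ℝ) - 1)) with hc
  have hcpos : ∀ i, 0 < c i := fun i => by
    have : (0 : ℝ) < (q : ℝ) ^ (i - 1) := pow_pos (by linarith) _
    positivity
  have hcle : ∀ i i', i ≤ i' → c i' ≤ c i := by
    intro i i' h
    apply one_div_le_one_div_of_le
    · have : (0 : ℝ) < (q : ℝ) ^ (i - 1) := pow_pos (by linarith) _
      positivity
    · apply mul_le_mul_of_nonneg_right _ (by linarith)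
      exact pow_le_pow_right₀ (by linarith) (by omega)
  -- the filtration as finsets
  set F : Finset Ω := hWfin.toFinset with hF
  set T : ℕ → Finset Ω := fun j => F.filter (· ∈ V j) with hT
  have hchain : ∀ i j, i ≤ j → j ≤ N → V i ≤ V j := by
    intro i j hij hjN
    induction j with
    | zero => obtain rfl : i = 0 := Nat.le_zero.mp hij; exact le_rfl
    | succ k ih =>
        rcases Nat.lt_or_ge i (k + 1) with h | h
        · exact (ih (by omega) (by omega)).trans (hVmono k (by omega))
        · obtain rfl : i = k + 1 := le_antisymm hij h
          exact le_rfl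
  have hTmem : ∀ j ≤ N, ∀ x, x ∈ T j ↔ x ∈ V j := by
    intro j hj x
    simp only [hT, Finset.mem_filter, hF, Set.Finite.mem_toFinset]
    constructor
    · exact fun h => h.2
    · intro h
      exact ⟨hVN ▸ hchain j N hj le_rfl h, h⟩
  have hT0 : T 0 = {0} := by
    ext x
    rw [hTmem 0 (Nat.zero_le N) x, hV0]
    simp
  have hTN : T N = F := by
    ext x
    rw [hTmem N le_rfl x, hVN]
    simp [hF, Set.Finite.mem_toFinset]
  have hTsub : ∀ j < N, T j ⊆ T (j + 1) :=
    fun j hj => Finset.filter_subset_filter _ (fun x hx => by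
      exact hx) |>.trans (by
        intro x hx
        simp only [hT, Finset.mem_filter] at hx ⊢
        exact ⟨hx.1, hVmono j hj hx.2⟩)
  have hTcard : ∀ j ≤ N, (T j).card = q ^ j := by
    intro j hj
    have hset : (↑(T j) : Set Ω) = (V j : Set Ω) := by
      ext x
      simpa using hTmem j hj x
    calc (T j).card = (↑(T j) : Set Ω).ncard := (Set.ncard_coe_finset _).symm
      _ = (V j : Set Ω).ncard := by rw [hset]
      _ = Nat.card (V j) := (Nat.card_coe_set_eq _).symm
      _ = q ^ j := hVcard j hj
  -- decomposition of S
  have hμ0' : μ 0 = ⊤ := (hμ0 0).mpr rfl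
  have hdecomp : S = μ ξ +
      ∑ j ∈ Finset.range N, (q ^ (j + 1) - q ^ j) • min (μ ξ) ((c (j + 1) : WithTop ℝ)) := by
    rw [hS, ← hTN, sum_chain_telescope T (fun w => min (μ ξ) (μ w)) N hTsub, hT0]
    congr 1
    · simp [hμ0']
    · apply Finset.sum_congr rfl
      intro j hj
      have hjN : j < N := Finset.mem_range.mp hj
      have hval : ∀ w ∈ T (j + 1) \ T j, min (μ ξ) (μ w) = min (μ ξ) ((c (j + 1) : WithTop ℝ)) := by
        intro w hw
        rw [Finset.mem_sdiff] at hw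
        have hw1 : w ∈ V (j + 1) := (hTmem (j + 1) (by omega) w).mp hw.1
        have hw2 : w ∉ V j := by
          intro hmem
          exact hw.2 ((hTmem j (by omega) w).mpr hmem)
        have := hVval (j + 1) (by omega) (by omega) w hw1 (by simpa using hw2)
        rw [this]
      rw [Finset.sum_congr rfl hval, Finset.sum_const,
        Finset.card_sdiff_of_subset (hTsub j hjN), hTcard (j + 1) (by omega), hTcard j (by omega)]
  have hqpow_le : ∀ j : ℕ, q ^ j ≤ q ^ (j + 1) :=
    fun j => Nat.pow_le_pow_right (by omega) (by omega)
  -- the key computation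
  have key : ∀ k ≤ N, (∀ i, 1 ≤ i → i ≤ k → μ ξ ≤ ((c i : ℝ) : WithTop ℝ)) →
      (∀ i, k < i → i ≤ N → ((c i : ℝ) : WithTop ℝ) ≤ μ ξ) →
      S = (q ^ k) • μ ξ + (((N : ℝ) - (k : ℝ) : ℝ) : WithTop ℝ) := by
    intro k hkN h1 h2
    rw [hdecomp, Finset.range_eq_Ico, ← Finset.sum_Ico_consecutive _ (Nat.zero_le k) hkN]
    have hsum1 : ∑ j ∈ Finset.Ico 0 k, (q ^ (j + 1) - q ^ j) • min (μ ξ) ((c (j + 1) : WithTop ℝ))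
        = (q ^ k - 1) • μ ξ := by
      rw [← Finset.range_eq_Ico]
      have heq : ∀ j ∈ Finset.range k,
          (q ^ (j + 1) - q ^ j) • min (μ ξ) ((c (j + 1) : WithTop ℝ))
          = (q ^ (j + 1) - q ^ j) • μ ξ := by
        intro j hj
        have hjk : j < k := Finset.mem_range.mp hj
        rw [min_eq_left (h1 (j + 1) (by omega) (by omega))]
      rw [Finset.sum_congr rfl heq, ← Finset.sum_smul,
        Finset.sum_range_tsub (f := fun j => q ^ j) (fun a b hab => Nat.pow_le_pow_right (by omega) hab)]
      simp
    have hsum2 : ∑ j ∈ Finset.Ico k N, (q ^ (j + 1) - q ^ j) • min (μ ξ) ((c (j + 1) : WithTop ℝ))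
        = (((N : ℝ) - (k : ℝ) : ℝ) : WithTop ℝ) := by
      have heq : ∀ j ∈ Finset.Ico k N,
          (q ^ (j + 1) - q ^ j) • min (μ ξ) ((c (j + 1) : WithTop ℝ))
          = (((1 : ℝ)) : WithTop ℝ) := by
        intro j hj
        rw [Finset.mem_Ico] at hj
        rw [min_eq_right (h2 (j + 1) (by omega) (by omega)), nsmul_coe_withTop]
        congr 1
        have hcast : ((q ^ (j + 1) - q ^ j : ℕ) : ℝ) = (q : ℝ) ^ (j + 1) - (q : ℝ) ^ j := by
          rw [Nat.cast_sub (hqpow_le j)]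
          push_cast
          ring
        rw [hcast, hc]
        simp only [Nat.add_sub_cancel]
        have hne : (q : ℝ) ^ j * ((q : ℝ) - 1) ≠ 0 := by
          have : (0 : ℝ) < (q : ℝ) ^ j := pow_pos (by linarith) _
          positivity
        field_simp
        ring
      rw [Finset.sum_congr rfl heq, Finset.sum_const, Nat.card_Ico, nsmul_coe_withTop]
      congr 1
      rw [Nat.cast_sub hkN]
      ring
    rw [hsum1, hsum2, ← add_assoc]
    congr 1
    have : μ ξ + (q ^ k - 1) • μ ξ = (1 + (q ^ k - 1)) • μ ξ := by
      rw [add_nsmul, one_nsmul]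
    rw [this]
    congr 1
    have : 1 ≤ q ^ k := Nat.one_le_pow _ _ (by omega)
    omega
  -- part (a)
  have parta : ((1 / ((q : ℝ) - 1) : ℝ) : WithTop ℝ) < μ ξ →
      S = μ ξ + ((N : ℝ) : WithTop ℝ) := by
    intro h
    have := key 0 (Nat.zero_le N) (by intro i h1 h2; omega) (by
      intro i hi hiN
      refine le_of_lt (lt_of_le_of_lt ?_ h)
      rw [WithTop.coe_le_coe]
      have := hcle 1 i hi
      simpa [hc] using this)
    rw [this]
    norm_num
  -- part (b)
  have partb : ∀ j, 1 ≤ j → j ≤ N →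
      ((1 / ((q : ℝ) ^ j * ((q : ℝ) - 1)) : ℝ) : WithTop ℝ) < μ ξ →
      μ ξ ≤ ((1 / ((q : ℝ) ^ (j - 1) * ((q : ℝ) - 1)) : ℝ) : WithTop ℝ) →
        S = (q ^ j) • μ ξ + (((N : ℝ) - (j : ℝ) : ℝ) : WithTop ℝ) ∧
        (((N : ℝ) - (j : ℝ) + 1 / ((q : ℝ) - 1) : ℝ) : WithTop ℝ) < S ∧
        S ≤ (((N : ℝ) - (j : ℝ) + 1 + 1 / ((q : ℝ) - 1) : ℝ) : WithTop ℝ) := by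
    intro j hj hjN hlt hle
    have hcj1 : c (j + 1) = 1 / ((q : ℝ) ^ j * ((q : ℝ) - 1)) := by
      simp [hc]
    have hb := key j hjN (by
      intro i hi hij
      refine le_trans hle ?_
      rw [WithTop.coe_le_coe]
      exact hcle i j hij) (by
      intro i hji hiN
      refine le_of_lt (lt_of_le_of_lt ?_ hlt)
      rw [WithTop.coe_le_coe, ← hcj1]
      exact hcle (j + 1) i (by omega))
    refine ⟨hb, ?_, ?_⟩
    · -- lower bound
      obtain ⟨x, hx⟩ := WithTop.ne_top_iff_exists.mp (hle.trans_lt (WithTop.coe_lt_top _)).ne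
      rw [← hx] at hlt hle hb
      rw [WithTop.coe_lt_coe] at hlt
      rw [nsmul_coe_withTop, ← WithTop.coe_add] at hb
      rw [hb, WithTop.coe_lt_coe]
      have hpj : (0 : ℝ) < (q : ℝ) ^ j := pow_pos (by linarith) _
      have : 1 / ((q : ℝ) - 1) < (q : ℝ) ^ j * x := by
        have := (mul_lt_mul_iff_right₀ hpj).mpr hlt
        calc 1 / ((q : ℝ) - 1) = (q : ℝ) ^ j * (1 / ((q : ℝ) ^ j * ((q : ℝ) - 1))) := by
              field_simp
          _ < (q : ℝ) ^ j * x := this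
      push_cast
      linarith
    · -- upper bound
      obtain ⟨x, hx⟩ := WithTop.ne_top_iff_exists.mp (hle.trans_lt (WithTop.coe_lt_top _)).ne
      rw [← hx] at hlt hle hb
      rw [WithTop.coe_le_coe] at hle
      rw [nsmul_coe_withTop, ← WithTop.coe_add] at hb
      rw [hb, WithTop.coe_le_coe]
      have hpj1 : (0 : ℝ) < (q : ℝ) ^ (j - 1) := pow_pos (by linarith) _
      have hpow : (q : ℝ) ^ j = (q : ℝ) ^ (j - 1) * (q : ℝ) := by
        rw [← pow_succ]
        congr 1
        omega
      have : (q : ℝ) ^ j * x ≤ 1 + 1 / ((q : ℝ) - 1) := by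
        have h1 : (q : ℝ) ^ j * x ≤ (q : ℝ) ^ j * (1 / ((q : ℝ) ^ (j - 1) * ((q : ℝ) - 1))) :=
          mul_le_mul_of_nonneg_left hle (by positivity)
        have h2 : (q : ℝ) ^ j * (1 / ((q : ℝ) ^ (j - 1) * ((q : ℝ) - 1)))
            = 1 + 1 / ((q : ℝ) - 1) := by
          rw [hpow]
          field_simp
          ring
        linarith
      push_cast
      linarith
  -- part (c)
  have partc : μ ξ ≤ ((1 / ((q : ℝ) ^ N * ((q : ℝ) - 1)) : ℝ) : WithTop ℝ) →
      S = (q ^ N) • μ ξ := by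
    intro h
    have hkey := key N le_rfl (by
      intro i hi hiN
      refine le_trans h ?_
      rw [WithTop.coe_le_coe]
      apply one_div_le_one_div_of_le
      · have : (0 : ℝ) < (q : ℝ) ^ N := pow_pos (by linarith) _
        positivity
      · apply mul_le_mul_of_nonneg_right _ (by linarith)
        exact pow_le_pow_right₀ (by linarith) (by omega)) (by
      intro i hi hiN
      omega)
    rw [hkey]
    simp
  refine ⟨parta, partb, partc, ?_⟩
  -- "in particular"
  intro hSbig
  by_contra hcon
  push_neg at hcon
  by_cases hcase : μ ξ ≤ ((1 / ((q : ℝ) ^ N * ((q : ℝ) - 1)) : ℝ) : WithTop ℝ)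
  · have hSc := partc hcase
    obtain ⟨x, hx⟩ := WithTop.ne_top_iff_exists.mp (hcase.trans_lt (WithTop.coe_lt_top _)).ne
    rw [← hx] at hcase hSc
    rw [WithTop.coe_le_coe] at hcase
    rw [nsmul_coe_withTop] at hSc
    rw [hSc] at hSbig
    rw [WithTop.coe_lt_coe] at hSbig
    have hpN : (0 : ℝ) < (q : ℝ) ^ N := pow_pos (by linarith) _
    have hb : (q : ℝ) ^ N * x ≤ 1 / ((q : ℝ) - 1) := by
      have h1 : (q : ℝ) ^ N * x ≤ (q : ℝ) ^ N * (1 / ((q : ℝ) ^ N * ((q : ℝ) - 1))) :=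
        mul_le_mul_of_nonneg_left hcase (by positivity)
      have h2 : (q : ℝ) ^ N * (1 / ((q : ℝ) ^ N * ((q : ℝ) - 1))) = 1 / ((q : ℝ) - 1) := by
        field_simp
      linarith
    have hN0 : (0 : ℝ) ≤ (N : ℝ) := Nat.cast_nonneg N
    push_cast at hSbig
    linarith
  · push_neg at hcase
    -- find the transition index j
    have hexists : ∃ i, ((1 / ((q : ℝ) ^ i * ((q : ℝ) - 1)) : ℝ) : WithTop ℝ) < μ ξ := ⟨N, hcase⟩
    have hj1 : 1 ≤ Nat.find hexists := by
      rw [Nat.one_le_iff_ne_zero]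
      intro h0
      have hsp := Nat.find_spec hexists
      rw [h0] at hsp
      simp only [pow_zero, one_mul] at hsp
      exact absurd hcon (not_le.mpr hsp)
    set j := Nat.find hexists with hjdef
    have hjspec := Nat.find_spec hexists
    have hjN : j ≤ N := Nat.find_le hcase
    have hjmin := Nat.find_min hexists (show j - 1 < j by omega)
    push_neg at hjmin
    have hpb := partb j hj1 hjN hjspec hjmin
    have hub := hpb.2.2
    have : S ≤ (((N : ℝ) + 1 / ((q : ℝ) - 1) : ℝ) : WithTop ℝ) := by
      refine le_trans hub ?_
      rw [WithTop.coe_le_coe]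
      have : (1 : ℝ) ≤ (j : ℝ) := by exact_mod_cast hj1
      linarith
    exact absurd hSbig (not_lt.mpr this)
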